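/- arXiv:2009.04729 — 4 statements merged into one kernel-verified Lean document; each statement's English description precedes it below -/
import Mathlib

section
/- Let T be a positive self-adjoint compact operator on a separable Hilbert space with eigenvalues τ_k satisfying τ_k ≤ c′ k^{-2r} for some c′ > 0 and r > 1/2. Then for every λ > 0, the effective dimension D(λ) = Tr((T + λI)^{-1} T) = Σ_{k≥1} τ_k/(τ_k + λ) satisfies D(λ) ≤ λ^{-1/(2r)} ∫₀^∞ c′/(c′ + s^{2r}) ds; in particular D(λ) ≤ C λ^{-1/(2r)} for a constant C depending only on c′ and r. -/
open MeasureTheory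

/-- If the eigenvalues of a positive trace-class operator satisfy `τ_k ≤ c' k^{-2r}` with
`r > 1/2`, then the effective dimension `D(λ) = Σ_k τ_k/(τ_k+λ)` satisfies
`D(λ) ≤ λ^{-1/(2r)} ∫₀^∞ c'/(c'+s^{2r}) ds`; in particular `D(λ) ≤ C λ^{-1/(2r)}`
with `C` depending only on `c'` and `r`. -/
theorem stmt3 (τ : ℕ → ℝ) (c' r lam : ℝ) (hc' : 0 < c') (hr : 1 / 2 < r) (hlam : 0 < lam)
    (hτpos : ∀ k : ℕ, 1 ≤ k → 0 < τ k)
    (hτ : ∀ k : ℕ, 1 ≤ k → τ k ≤ c' * (k : ℝ) ^ (-(2 * r))) :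
    (∑' k : ℕ, τ (k + 1) / (τ (k + 1) + lam))
      ≤ lam ^ (-(1 / (2 * r))) * ∫ s in Set.Ioi (0 : ℝ), c' / (c' + s ^ (2 * r)) ∧
    ∃ C : ℝ, 0 < C ∧
      (∑' k : ℕ, τ (k + 1) / (τ (k + 1) + lam)) ≤ C * lam ^ (-(1 / (2 * r))) := by
  have h2r : (0:ℝ) < 2 * r := by linarith
  set p : ℝ := 2 * r with hp
  set f : ℝ → ℝ := fun t => c' / (c' + t ^ p) with hfdef
  set h : ℝ → ℝ := fun s => c' / (c' + lam * s ^ p) with hhdef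
  -- denominators positive for nonneg arguments
  have hden : ∀ s : ℝ, 0 ≤ s → 0 < c' + lam * s ^ p := fun s hs => by
    have := Real.rpow_nonneg hs p
    nlinarith
  have hhnonneg : ∀ s : ℝ, 0 ≤ s → 0 ≤ h s := fun s hs =>
    div_nonneg hc'.le (hden s hs).le
  -- antitone on Ici 0
  have hanti : AntitoneOn h (Set.Ici 0) := by
    intro s hs t ht hst
    have h1 : s ^ p ≤ t ^ p := Real.rpow_le_rpow hs hst h2r.le
    have h2 : 0 < c' + lam * s ^ p := hden s hs
    apply div_le_div_of_nonneg_left hc'.le h2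
    nlinarith
  -- termwise bound
  have hterm : ∀ k : ℕ, τ (k + 1) / (τ (k + 1) + lam) ≤ h ((k : ℝ) + 1) := by
    intro k
    have hk1 : (1:ℕ) ≤ k + 1 := Nat.le_add_left 1 k
    have hn : (0:ℝ) < (k : ℝ) + 1 := by positivity
    have hτp := hτpos (k+1) hk1
    have hτb := hτ (k+1) hk1
    have hcast : ((k+1 : ℕ) : ℝ) = (k : ℝ) + 1 := by push_cast; ring
    rw [hcast] at hτb
    set q : ℝ := ((k : ℝ) + 1) ^ p with hq
    have hqpos : 0 < q := Real.rpow_pos_of_pos hn p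
    have ha : τ (k+1) ≤ c' / q := by
      rw [Real.rpow_neg hn.le] at hτb
      rw [div_eq_mul_inv]; exact hτb
    have hapos : 0 < c' / q := div_pos hc' hqpos
    have step1 : τ (k + 1) / (τ (k + 1) + lam) ≤ (c'/q) / ((c'/q) + lam) := by
      rw [div_le_div_iff₀ (by positivity) (by positivity)]
      nlinarith
    have step2 : (c'/q) / ((c'/q) + lam) = c' / (c' + lam * q) := by
      rw [div_eq_div_iff (by positivity) (by nlinarith)]
      field_simp
    calc τ (k + 1) / (τ (k + 1) + lam) ≤ (c'/q) / ((c'/q) + lam) := step1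
      _ = c' / (c' + lam * q) := step2
      _ = h ((k : ℝ) + 1) := rfl
  -- summability of the majorant
  have hpgt : -p < -1 := by simp only [hp]; linarith
  have hsum_rpow : Summable (fun k : ℕ => ((k : ℝ) + 1) ^ (-p)) := by
    have : Summable (fun k : ℕ => ((k : ℝ)) ^ (-p)) := Real.summable_nat_rpow.2 hpgt
    have := (summable_nat_add_iff 1).2 this
    simpa using this
  have hsum_h : Summable (fun k : ℕ => h ((k : ℝ) + 1)) := by
    apply Summable.of_nonneg_of_le (fun k => hhnonneg _ (by positivity))
      (fun k => ?_) (hsum_rpow.mul_left (c'/lam))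
    have hn : (0:ℝ) < (k : ℝ) + 1 := by positivity
    have hqpos : 0 < ((k : ℝ) + 1) ^ p := Real.rpow_pos_of_pos hn p
    have h1 : h ((k : ℝ) + 1) ≤ c' / (lam * ((k : ℝ) + 1) ^ p) := by
      apply div_le_div_of_nonneg_left hc'.le (by positivity)
      nlinarith
    calc h ((k : ℝ) + 1) ≤ c' / (lam * ((k : ℝ) + 1) ^ p) := h1
      _ = c' / lam * (((k : ℝ) + 1) ^ (-p)) := by
          rw [Real.rpow_neg hn.le]; field_simp
  -- summability of the LHS
  have hLnonneg : ∀ k : ℕ, 0 ≤ τ (k + 1) / (τ (k + 1) + lam) := fun k =>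
    div_nonneg (hτpos (k+1) (Nat.le_add_left 1 k)).le
      (by have := hτpos (k+1) (Nat.le_add_left 1 k); linarith)
  have hsum_L : Summable (fun k : ℕ => τ (k + 1) / (τ (k + 1) + lam)) :=
    Summable.of_nonneg_of_le hLnonneg hterm hsum_h
  -- measurability of h
  have hmeas : Measurable h := by
    unfold h
    fun_prop
  -- integrability of h on Ioi 0
  have hint : IntegrableOn h (Set.Ioi 0) := by
    have h01 : IntegrableOn h (Set.Ioc 0 1) := by
      apply Integrable.mono' (integrable_const (1:ℝ))
        hmeas.aestronglyMeasurable
      refine (ae_restrict_iff' measurableSet_Ioc).2 (Filter.Eventually.of_forall ?_)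
      intro s hs
      rw [Real.norm_eq_abs, abs_of_nonneg (hhnonneg s hs.1.le)]
      have := hden s hs.1.le
      have hsp := Real.rpow_nonneg hs.1.le p
      rw [div_le_one this]
      nlinarith
    have h1i : IntegrableOn h (Set.Ioi 1) := by
      apply Integrable.mono'
        ((integrableOn_Ioi_rpow_of_lt hpgt one_pos).const_mul (c'/lam))
        hmeas.aestronglyMeasurable
      refine (ae_restrict_iff' measurableSet_Ioi).2 (Filter.Eventually.of_forall ?_)
      intro s hs
      have hs0 : (0:ℝ) < s := lt_trans one_pos hs
      have hqpos : 0 < s ^ p := Real.rpow_pos_of_pos hs0 p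
      rw [Real.norm_eq_abs, abs_of_nonneg (hhnonneg s hs0.le)]
      have h1 : h s ≤ c' / (lam * s ^ p) := by
        apply div_le_div_of_nonneg_left hc'.le (by positivity)
        nlinarith
      calc h s ≤ c' / (lam * s ^ p) := h1
        _ = c' / lam * s ^ (-p) := by rw [Real.rpow_neg hs0.le]; field_simp
    have : Set.Ioc (0:ℝ) 1 ∪ Set.Ioi 1 = Set.Ioi 0 := Set.Ioc_union_Ioi_eq_Ioi zero_le_one
    rw [← this]
    exact h01.union h1i
  have hhae : 0 ≤ᵐ[volume.restrict (Set.Ioi (0:ℝ))] h :=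
    (ae_restrict_iff' measurableSet_Ioi).2
      (Filter.Eventually.of_forall fun s hs => hhnonneg s (le_of_lt hs))
  -- partial sums ≤ integral over Ioi 0
  have hsum_int : (∑' k : ℕ, h ((k : ℝ) + 1)) ≤ ∫ s in Set.Ioi (0:ℝ), h s := by
    apply Summable.tsum_le_of_sum_le hsum_h
    intro u
    obtain ⟨n, hn⟩ := u.exists_nat_subset_range
    have h1 : ∑ k ∈ u, h ((k : ℝ) + 1) ≤ ∑ k ∈ Finset.range n, h ((k : ℝ) + 1) :=
      Finset.sum_le_sum_of_subset_of_nonneg hn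
        (fun k _ _ => hhnonneg _ (by positivity))
    have h2 : ∑ k ∈ Finset.range n, h ((k : ℝ) + 1) ≤ ∫ x in (0:ℝ)..(0 + n : ℕ), h x := by
      have := AntitoneOn.sum_le_integral (f := h) (x₀ := 0) (a := n)
        (hanti.mono (by
          intro x hx
          exact hx.1))
      simpa using this
    have h3 : (∫ x in (0:ℝ)..(n : ℕ), h x) ≤ ∫ s in Set.Ioi (0:ℝ), h s := by
      rw [intervalIntegral.integral_of_le (by positivity)]
      apply setIntegral_mono_set hint hhae
      exact HasSubset.Subset.eventuallyLE Set.Ioc_subset_Ioi_self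
    calc ∑ k ∈ u, h ((k : ℝ) + 1) ≤ ∑ k ∈ Finset.range n, h ((k : ℝ) + 1) := h1
      _ ≤ ∫ x in (0:ℝ)..(0 + n : ℕ), h x := h2
      _ = ∫ x in (0:ℝ)..(n : ℕ), h x := by norm_num
      _ ≤ ∫ s in Set.Ioi (0:ℝ), h s := h3
  -- change of variables
  set b : ℝ := lam ^ (1/p) with hb
  have hbpos : 0 < b := Real.rpow_pos_of_pos hlam _
  have hbp : b ^ p = lam := by
    rw [hb, ← Real.rpow_mul hlam.le, one_div, inv_mul_cancel₀ (ne_of_gt h2r), Real.rpow_one]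
  have hchange : (∫ s in Set.Ioi (0:ℝ), h s) = lam ^ (-(1/p)) * ∫ s in Set.Ioi (0:ℝ), f s := by
    have heq : ∀ s ∈ Set.Ioi (0:ℝ), h s = f (b * s) := by
      intro s hs
      simp only [hhdef, hfdef]
      rw [Real.mul_rpow hbpos.le (le_of_lt hs), hbp]
    rw [setIntegral_congr_fun measurableSet_Ioi heq]
    rw [integral_comp_mul_left_Ioi f 0 hbpos]
    rw [mul_zero, smul_eq_mul]
    congr 1
    rw [Real.rpow_neg hlam.le]
  -- first inequality
  have hmain : (∑' k : ℕ, τ (k + 1) / (τ (k + 1) + lam))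
      ≤ lam ^ (-(1 / (2 * r))) * ∫ s in Set.Ioi (0 : ℝ), c' / (c' + s ^ (2 * r)) := by
    calc (∑' k : ℕ, τ (k + 1) / (τ (k + 1) + lam))
        ≤ ∑' k : ℕ, h ((k : ℝ) + 1) := Summable.tsum_le_tsum hterm hsum_L hsum_h
      _ ≤ ∫ s in Set.Ioi (0:ℝ), h s := hsum_int
      _ = lam ^ (-(1/p)) * ∫ s in Set.Ioi (0:ℝ), f s := hchange
  refine ⟨hmain, max (∫ s in Set.Ioi (0:ℝ), f s) 1, lt_of_lt_of_le one_pos (le_max_right _ _), ?_⟩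
  calc (∑' k : ℕ, τ (k + 1) / (τ (k + 1) + lam))
      ≤ lam ^ (-(1/p)) * ∫ s in Set.Ioi (0:ℝ), f s := hmain
    _ ≤ lam ^ (-(1/p)) * max (∫ s in Set.Ioi (0:ℝ), f s) 1 := by
        apply mul_le_mul_of_nonneg_left (le_max_left _ _)
        exact (Real.rpow_pos_of_pos hlam _).le
    _ = max (∫ s in Set.Ioi (0:ℝ), f s) 1 * lam ^ (-(1 / (2*r))) := by rw [mul_comm]
end

section
/- Let T and T_n be positive self-adjoint bounded operators on a Hilbert space and λ > 0. Then ‖(T + λI)(T_n + λI)^{-1}‖_op ≤ ( λ^{-1/2} ‖(T + λI)^{-1/2}(T_n − T)‖_op + 1 )². -/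
open scoped RealInnerProductSpace

-- helper: if B*Sn = 1 and ⟪Bx,x⟫ ≥ lam‖x‖², then ‖Sn‖ ≤ 1/lam
lemma aux_inv_norm_le {H : Type*} [NormedAddCommGroup H] [InnerProductSpace ℝ H]
    (B Sn : H →L[ℝ] H) (lam : ℝ) (hlam : 0 < lam)
    (hpos : ∀ x : H, lam * ‖x‖ ^ 2 ≤ ⟪B x, x⟫) (h : B * Sn = 1) : ‖Sn‖ ≤ 1 / lam := by
  refine ContinuousLinearMap.opNorm_le_bound _ (by positivity) fun y => ?_
  set x := Sn y with hx
  have hBx : B x = y := by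
    have := congrArg (fun f : H →L[ℝ] H => f y) h
    simpa using this
  have h1 : lam * ‖x‖ ^ 2 ≤ ‖y‖ * ‖x‖ := by
    calc lam * ‖x‖ ^ 2 ≤ ⟪B x, x⟫ := hpos x
      _ ≤ ‖B x‖ * ‖x‖ := real_inner_le_norm _ _
      _ = ‖y‖ * ‖x‖ := by rw [hBx]
  rcases eq_or_lt_of_le (norm_nonneg x) with h0 | h0
  · rw [← h0]; positivity
  · rw [div_mul_eq_mul_div, le_div_iff₀ hlam]
    nlinarith

/-- For positive self-adjoint bounded operators `T, Tₙ` on a Hilbert space and `λ > 0`,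
with `Sₙ = (Tₙ + λI)⁻¹` and `R = (T + λI)^{-1/2}` (positive self-adjoint square root of
`(T + λI)⁻¹`): `‖(T + λI)(Tₙ + λI)⁻¹‖ ≤ (λ^{-1/2} ‖(T + λI)^{-1/2}(Tₙ − T)‖ + 1)²`. -/
theorem stmt6 {H : Type*} [NormedAddCommGroup H] [InnerProductSpace ℝ H] [CompleteSpace H]
    (T Tn S Sn R : H →L[ℝ] H)
    (hT : IsSelfAdjoint T) (hTpos : ∀ x : H, 0 ≤ ⟪T x, x⟫)
    (hTn : IsSelfAdjoint Tn) (hTnpos : ∀ x : H, 0 ≤ ⟪Tn x, x⟫)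
    (lam : ℝ) (hlam : 0 < lam)
    (hS₁ : S * (T + lam • 1) = 1) (hS₂ : (T + lam • 1) * S = 1)
    (hSn₁ : Sn * (Tn + lam • 1) = 1) (hSn₂ : (Tn + lam • 1) * Sn = 1)
    (hR : IsSelfAdjoint R) (hRpos : ∀ x : H, 0 ≤ ⟪R x, x⟫) (hRS : R * R = S) :
    ‖(T + lam • 1) * Sn‖ ≤ (‖R * (Tn - T)‖ / Real.sqrt lam + 1) ^ 2 := by
  set A := T + lam • 1 with hA
  set B := Tn + lam • 1 with hB
  set D := Tn - T with hD
  -- coercivity facts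
  have hBpos : ∀ x : H, lam * ‖x‖ ^ 2 ≤ ⟪B x, x⟫ := by
    intro x
    have : ⟪B x, x⟫ = ⟪Tn x, x⟫ + lam * ‖x‖ ^ 2 := by
      simp [hB, ContinuousLinearMap.add_apply, ContinuousLinearMap.smul_apply,
        inner_add_left, real_inner_smul_left, real_inner_self_eq_norm_sq]
    rw [this]
    nlinarith [hTnpos x]
  have hApos : ∀ x : H, lam * ‖x‖ ^ 2 ≤ ⟪A x, x⟫ := by
    intro x
    have : ⟪A x, x⟫ = ⟪T x, x⟫ + lam * ‖x‖ ^ 2 := by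
      simp [hA, ContinuousLinearMap.add_apply, ContinuousLinearMap.smul_apply,
        inner_add_left, real_inner_smul_left, real_inner_self_eq_norm_sq]
    rw [this]
    nlinarith [hTpos x]
  have hSnle : ‖Sn‖ ≤ 1 / lam := aux_inv_norm_le B Sn lam hlam hBpos hSn₂
  have hSle : ‖S‖ ≤ 1 / lam := aux_inv_norm_le A S lam hlam hApos hS₂
  -- ‖R‖ ≤ 1/√lam
  have hsq : Real.sqrt lam > 0 := Real.sqrt_pos.mpr hlam
  have hRle : ‖R‖ ≤ 1 / Real.sqrt lam := by
    refine ContinuousLinearMap.opNorm_le_bound _ (by positivity) fun x => ?_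
    have h1 : ‖R x‖ ^ 2 = ⟪S x, x⟫ := by
      have := hR.isSymmetric (R x) x
      rw [← hRS]
      rw [← real_inner_self_eq_norm_sq]
      simpa [ContinuousLinearMap.mul_apply] using this.symm
    have h2 : ⟪S x, x⟫ ≤ (1 / lam) * ‖x‖ ^ 2 := by
      calc ⟪S x, x⟫ ≤ ‖S x‖ * ‖x‖ := real_inner_le_norm _ _
        _ ≤ (‖S‖ * ‖x‖) * ‖x‖ :=
          mul_le_mul_of_nonneg_right (ContinuousLinearMap.le_opNorm _ _) (norm_nonneg _)
        _ ≤ ((1 / lam) * ‖x‖) * ‖x‖ := by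
          have := mul_le_mul_of_nonneg_right hSle (norm_nonneg x)
          nlinarith [norm_nonneg x]
        _ = (1 / lam) * ‖x‖ ^ 2 := by ring
    have h3 : ‖R x‖ ^ 2 ≤ (1 / Real.sqrt lam * ‖x‖) ^ 2 := by
      rw [h1]
      calc ⟪S x, x⟫ ≤ (1 / lam) * ‖x‖ ^ 2 := h2
        _ = (1 / Real.sqrt lam * ‖x‖) ^ 2 := by
          rw [mul_pow, div_pow, one_pow, Real.sq_sqrt hlam.le]
    calc ‖R x‖ = Real.sqrt (‖R x‖ ^ 2) := (Real.sqrt_sq (norm_nonneg _)).symm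
      _ ≤ Real.sqrt ((1 / Real.sqrt lam * ‖x‖) ^ 2) := Real.sqrt_le_sqrt h3
      _ = 1 / Real.sqrt lam * ‖x‖ := Real.sqrt_sq (by positivity)
  -- key algebraic identity
  have hBA : B - A = D := by rw [hB, hA, hD]; abel
  have e1 : D * Sn = 1 - A * Sn := by
    rw [← hBA, sub_mul, hSn₂]
  have e1' : A * Sn = 1 - D * Sn := by rw [e1]; noncomm_ring
  have e2 : D * Sn = D * S - D * S * (D * Sn) := by
    have hDS : D * (S * A) = D := by rw [hS₁, mul_one]
    calc D * Sn = D * (S * A) * Sn := by rw [hDS]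
      _ = D * S * (A * Sn) := by simp only [mul_assoc]
      _ = D * S * (1 - D * Sn) := by rw [e1']
      _ = D * S - D * S * (D * Sn) := by noncomm_ring
  have key : A * Sn = 1 - D * S + D * S * (D * Sn) := by
    rw [e1']; nth_rewrite 1 [e2]; noncomm_ring
  -- norm estimates
  have hDR : ‖D * R‖ = ‖R * D‖ := by
    have hstar : D * R = star (R * D) := by
      rw [star_mul, hR.star_eq, (hTn.sub hT).star_eq]
    rw [hstar]; exact norm_star (R * D)
  have hone : ‖(1 : H →L[ℝ] H)‖ ≤ 1 := by
    rw [ContinuousLinearMap.one_def]; exact ContinuousLinearMap.norm_id_le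
  have hDSle : ‖D * S‖ ≤ ‖R * D‖ / Real.sqrt lam := by
    have hds : D * S = (D * R) * R := by rw [← hRS]; noncomm_ring
    rw [hds]
    calc ‖(D * R) * R‖ ≤ ‖D * R‖ * ‖R‖ := norm_mul_le _ _
      _ ≤ ‖R * D‖ * (1 / Real.sqrt lam) := by
        rw [hDR]; exact mul_le_mul_of_nonneg_left hRle (norm_nonneg _)
      _ = ‖R * D‖ / Real.sqrt lam := by ring
  have hDSDle : ‖D * S * (D * Sn)‖ ≤ ‖R * D‖ * ‖R * D‖ / lam := by
    have hds : D * S * (D * Sn) = (D * R) * ((R * D) * Sn) := by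
      rw [← hRS]; noncomm_ring
    rw [hds]
    calc ‖(D * R) * ((R * D) * Sn)‖ ≤ ‖D * R‖ * ‖(R * D) * Sn‖ := norm_mul_le _ _
      _ ≤ ‖D * R‖ * (‖R * D‖ * ‖Sn‖) :=
        mul_le_mul_of_nonneg_left (norm_mul_le _ _) (norm_nonneg _)
      _ ≤ ‖R * D‖ * (‖R * D‖ * (1 / lam)) := by
        rw [hDR]
        exact mul_le_mul_of_nonneg_left
          (mul_le_mul_of_nonneg_left hSnle (norm_nonneg _)) (norm_nonneg _)
      _ = ‖R * D‖ * ‖R * D‖ / lam := by ring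
  have hmain : ‖A * Sn‖ ≤ 1 + ‖R * D‖ / Real.sqrt lam + ‖R * D‖ * ‖R * D‖ / lam := by
    rw [key]
    calc ‖1 - D * S + D * S * (D * Sn)‖
        ≤ ‖1 - D * S‖ + ‖D * S * (D * Sn)‖ := norm_add_le _ _
      _ ≤ ‖(1 : H →L[ℝ] H)‖ + ‖D * S‖ + ‖D * S * (D * Sn)‖ := by
          have := norm_sub_le (1 : H →L[ℝ] H) (D * S)
          linarith
      _ ≤ 1 + ‖R * D‖ / Real.sqrt lam + ‖R * D‖ * ‖R * D‖ / lam := by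
          linarith
  have hsqs : Real.sqrt lam ^ 2 = lam := Real.sq_sqrt hlam.le
  have hx : 0 ≤ ‖R * D‖ := norm_nonneg _
  calc ‖A * Sn‖ ≤ 1 + ‖R * D‖ / Real.sqrt lam + ‖R * D‖ * ‖R * D‖ / lam := hmain
    _ ≤ (‖R * D‖ / Real.sqrt lam + 1) ^ 2 := by
        have h := div_nonneg hx hsq.le
        have hexp : (‖R * D‖ / Real.sqrt lam + 1) ^ 2
            = ‖R * D‖ * ‖R * D‖ / lam + 2 * (‖R * D‖ / Real.sqrt lam) + 1 := by
          have e : (‖R * D‖ / Real.sqrt lam + 1) ^ 2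
              = (‖R * D‖ / Real.sqrt lam) ^ 2 + 2 * (‖R * D‖ / Real.sqrt lam) + 1 := by ring
          rw [e, div_pow, hsqs, sq]
        rw [hexp]
        linarith
end

section
/- Let T and T_n be positive self-adjoint bounded operators on a Hilbert space and λ > 0. Then ‖(T + λI)^{1/2}(T_n + λI)^{-1/2}‖_op ≤ λ^{-1/2} ‖(T + λI)^{-1/2}(T_n − T)‖_op + 1. -/
open scoped RealInnerProductSpace

private lemma comm_aux {A : Type*} [Ring A] {a b : A} (h1 : a * (b * b) = 1)
    (h2 : (b * b) * a = 1) : a * b = b * a := by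
  have h3 : a * b = a * b * ((b * b) * a) := by rw [h2, mul_one]
  rw [h3, show a * b * ((b * b) * a) = (a * (b * b)) * (b * a) by noncomm_ring, h1, one_mul]

/-- For positive self-adjoint bounded operators `T, Tₙ` on a Hilbert space and `λ > 0`,
with `P = (T + λI)^{1/2}`, `Qₙ = (Tₙ + λI)^{-1/2}` and `R = (T + λI)^{-1/2}`:
`‖(T + λI)^{1/2}(Tₙ + λI)^{-1/2}‖ ≤ λ^{-1/2} ‖(T + λI)^{-1/2}(Tₙ − T)‖ + 1`. -/
theorem stmt7 {H : Type*} [NormedAddCommGroup H] [InnerProductSpace ℝ H] [CompleteSpace H]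
    (T Tn S Sn P Qn R : H →L[ℝ] H)
    (hT : IsSelfAdjoint T) (hTpos : ∀ x : H, 0 ≤ ⟪T x, x⟫)
    (hTn : IsSelfAdjoint Tn) (hTnpos : ∀ x : H, 0 ≤ ⟪Tn x, x⟫)
    (lam : ℝ) (hlam : 0 < lam)
    (hS₁ : S * (T + lam • 1) = 1) (hS₂ : (T + lam • 1) * S = 1)
    (hSn₁ : Sn * (Tn + lam • 1) = 1) (hSn₂ : (Tn + lam • 1) * Sn = 1)
    (hP : IsSelfAdjoint P) (hPpos : ∀ x : H, 0 ≤ ⟪P x, x⟫) (hP2 : P * P = T + lam • 1)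
    (hQn : IsSelfAdjoint Qn) (hQnpos : ∀ x : H, 0 ≤ ⟪Qn x, x⟫) (hQn2 : Qn * Qn = Sn)
    (hR : IsSelfAdjoint R) (hRpos : ∀ x : H, 0 ≤ ⟪R x, x⟫) (hRS : R * R = S) :
    ‖P * Qn‖ ≤ ‖R * (Tn - T)‖ / Real.sqrt lam + 1 := by
  set a := ‖P * Qn‖ with ha
  set c := ‖R * (Tn - T)‖ with hc
  clear_value a c
  have hs : (0:ℝ) < Real.sqrt lam := Real.sqrt_pos.2 hlam
  have hs2 : Real.sqrt lam * Real.sqrt lam = lam := Real.mul_self_sqrt hlam.le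
  -- self-adjointness of S
  have hTlsa : IsSelfAdjoint (T + lam • 1) := by
    rw [IsSelfAdjoint, star_add, star_smul, star_one, hT.star_eq, star_trivial]
  have hSsa : IsSelfAdjoint S := by
    have h1 : star S * (T + lam • 1) = 1 := by
      have := congrArg star hS₂
      rwa [star_mul, star_one, hTlsa.star_eq] at this
    calc star S = star S * ((T + lam • 1) * S) := by rw [hS₂, mul_one]
    _ = (star S * (T + lam • 1)) * S := by rw [mul_assoc]
    _ = S := by rw [h1, one_mul]
  -- commutation S P = P S
  have hSP : S * P = P * S := by
    refine comm_aux ?_ ?_ <;> rw [hP2] <;> assumption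
  -- P S P = 1
  have hPSP : P * S * P = 1 := by
    rw [show P * S * P = (P * S) * P from rfl, ← hSP, mul_assoc, hP2, hS₁]
  -- (S P)² = S
  have hSPsq : (S * P) * (S * P) = S := by
    calc (S * P) * (S * P) = S * (P * S * P) := by noncomm_ring
    _ = S := by rw [hPSP, mul_one]
  -- resolvent identity
  have hres : Sn = S * (T - Tn) * Sn + S := by
    have h0 : S * ((T + lam • 1) * Sn) = Sn := by rw [← mul_assoc, hS₁, one_mul]
    have hsplit : T + lam • 1 = (T - Tn) + (Tn + lam • 1) := by abel
    calc Sn = S * ((T + lam • 1) * Sn) := h0.symm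
    _ = S * (((T - Tn) + (Tn + lam • 1)) * Sn) := by rw [← hsplit]
    _ = S * (T - Tn) * Sn + S * ((Tn + lam • 1) * Sn) := by
        rw [add_mul, mul_add, mul_assoc]
    _ = S * (T - Tn) * Sn + S := by rw [hSn₂, mul_one]
  -- key decomposition
  have hdecomp : P * (Qn * Qn) * P
      = ((S * P) * (T - Tn) * Qn) * (Qn * P) + 1 := by
    calc P * (Qn * Qn) * P = P * Sn * P := by rw [hQn2]
    _ = P * (S * (T - Tn) * Sn + S) * P := by rw [← hres]
    _ = (P * S) * (T - Tn) * Sn * P + P * S * P := by noncomm_ring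
    _ = (S * P) * (T - Tn) * (Qn * Qn) * P + 1 := by rw [hSP, hQn2, hPSP]
    _ = ((S * P) * (T - Tn) * Qn) * (Qn * P) + 1 := by noncomm_ring
  -- ‖Sn‖ ≤ 1/λ
  have hSnNorm : ‖Sn‖ ≤ 1 / lam := by
    refine ContinuousLinearMap.opNorm_le_bound _ (by positivity) fun x => ?_
    rcases eq_or_ne (Sn x) 0 with h | h
    · rw [h, norm_zero]; positivity
    · set y := Sn x with hy
      have hxy : (Tn + lam • 1) y = x := by
        have := congrArg (fun f : H →L[ℝ] H => f x) hSn₂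
        simpa [ContinuousLinearMap.mul_apply] using this
      have h1 : ⟪x, y⟫ = ⟪Tn y, y⟫ + lam * (‖y‖ * ‖y‖) := by
        rw [← hxy]
        simp [ContinuousLinearMap.add_apply, ContinuousLinearMap.smul_apply,
          inner_add_left, real_inner_smul_left, real_inner_self_eq_norm_mul_norm]
        exact Or.inl (sq _)
      have h2 : lam * (‖y‖ * ‖y‖) ≤ ‖x‖ * ‖y‖ := by
        have h3 := real_inner_le_norm x y
        have h4 := hTnpos y
        nlinarith
      have h5 : (0:ℝ) < ‖y‖ := norm_pos_iff.2 h
      rw [div_mul_eq_mul_div, le_div_iff₀ hlam]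
      nlinarith
  -- ‖Qn‖ ≤ 1/√λ
  have hQnNorm : ‖Qn‖ ≤ 1 / Real.sqrt lam := by
    have h1 : ‖Qn‖ * ‖Qn‖ = ‖Sn‖ := by
      rw [← hQn2, ← CStarRing.norm_star_mul_self, hQn.star_eq]
    have h2 : ‖Sn‖ * lam ≤ 1 := by
      have := (le_div_iff₀ hlam).1 hSnNorm
      linarith
    have key : (‖Qn‖ * Real.sqrt lam) * (‖Qn‖ * Real.sqrt lam) ≤ 1 := by
      calc (‖Qn‖ * Real.sqrt lam) * (‖Qn‖ * Real.sqrt lam)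
          = (‖Qn‖ * ‖Qn‖) * (Real.sqrt lam * Real.sqrt lam) := by ring
      _ = ‖Sn‖ * lam := by rw [h1, hs2]
      _ ≤ 1 := h2
    rw [le_div_iff₀ hs]
    nlinarith [key, mul_nonneg (norm_nonneg Qn) hs.le]
  -- ‖(S P)(T − Tn)‖ = ‖R (T − Tn)‖ = c
  have hSPnorm : ‖(S * P) * (T - Tn)‖ = c := by
    have hsaSP : IsSelfAdjoint (S * P) := by
      rw [IsSelfAdjoint, star_mul, hP.star_eq, hSsa.star_eq, hSP]
    have hsaD : IsSelfAdjoint (T - Tn) := hT.sub hTn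
    have hstar1 : star ((S * P) * (T - Tn)) = (T - Tn) * (S * P) := by
      rw [star_mul, hsaSP.star_eq, hsaD.star_eq]
    have hstar2 : star (R * (T - Tn)) = (T - Tn) * R := by
      rw [star_mul, hR.star_eq, hsaD.star_eq]
    have h1 : star ((S * P) * (T - Tn)) * ((S * P) * (T - Tn))
        = star (R * (T - Tn)) * (R * (T - Tn)) := by
      rw [hstar1, hstar2]
      calc (T - Tn) * (S * P) * ((S * P) * (T - Tn))
          = (T - Tn) * ((S * P) * (S * P)) * (T - Tn) := by noncomm_ring
      _ = (T - Tn) * (R * R) * (T - Tn) := by rw [hSPsq, hRS]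
      _ = (T - Tn) * R * (R * (T - Tn)) := by noncomm_ring
    have h2 : ‖(S * P) * (T - Tn)‖ * ‖(S * P) * (T - Tn)‖
        = ‖R * (T - Tn)‖ * ‖R * (T - Tn)‖ := by
      rw [← CStarRing.norm_star_mul_self, ← CStarRing.norm_star_mul_self, h1]
    have h3 : ‖R * (T - Tn)‖ = c := by
      rw [hc, show R * (Tn - T) = -(R * (T - Tn)) by noncomm_ring, norm_neg]
    rw [← h3]
    exact (mul_self_inj (norm_nonneg _) (norm_nonneg _)).1 h2
  -- ‖Qn P‖ = a
  have hQnP : ‖Qn * P‖ = a := by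
    rw [ha, ← norm_star (Qn * P), star_mul, hP.star_eq, hQn.star_eq]
  -- the quadratic inequality
  have hkey : a * a ≤ 1 + (c * (1 / Real.sqrt lam)) * a := by
    have h1 : a * a = ‖P * (Qn * Qn) * P‖ := by
      have hmm : (P * Qn) * star (P * Qn) = P * (Qn * Qn) * P := by
        rw [star_mul, hP.star_eq, hQn.star_eq]
        noncomm_ring
      rw [ha, ← CStarRing.norm_self_mul_star, hmm]
    rw [h1, hdecomp]
    calc ‖((S * P) * (T - Tn) * Qn) * (Qn * P) + 1‖
        ≤ ‖((S * P) * (T - Tn) * Qn) * (Qn * P)‖ + ‖(1 : H →L[ℝ] H)‖ := norm_add_le _ _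
    _ ≤ ‖(S * P) * (T - Tn)‖ * ‖Qn‖ * ‖Qn * P‖ + 1 := by
        have hb : ‖((S * P) * (T - Tn) * Qn) * (Qn * P)‖
            ≤ ‖(S * P) * (T - Tn)‖ * ‖Qn‖ * ‖Qn * P‖ := by
          calc ‖((S * P) * (T - Tn) * Qn) * (Qn * P)‖
              ≤ ‖(S * P) * (T - Tn) * Qn‖ * ‖Qn * P‖ := norm_mul_le _ _
          _ ≤ (‖(S * P) * (T - Tn)‖ * ‖Qn‖) * ‖Qn * P‖ := by
              gcongr
              exact norm_mul_le _ _
        have hone : ‖(1 : H →L[ℝ] H)‖ ≤ 1 := ContinuousLinearMap.norm_id_le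
        linarith
    _ ≤ (c * (1 / Real.sqrt lam)) * a + 1 := by
        rw [hSPnorm, hQnP]
        have hc0 : (0:ℝ) ≤ c := hc ▸ norm_nonneg _
        have ha0 : (0:ℝ) ≤ a := ha ▸ norm_nonneg _
        have h4 : c * ‖Qn‖ * a ≤ c * (1 / Real.sqrt lam) * a := by
          apply mul_le_mul_of_nonneg_right _ ha0
          exact mul_le_mul_of_nonneg_left hQnNorm hc0
        linarith
    _ = 1 + (c * (1 / Real.sqrt lam)) * a := by ring
  -- conclude
  have ha0 : (0:ℝ) ≤ a := ha ▸ norm_nonneg _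
  have hc0 : (0:ℝ) ≤ c := hc ▸ norm_nonneg _
  have hd0 : 0 ≤ c * (1 / Real.sqrt lam) := by positivity
  have hdiv : c / Real.sqrt lam = c * (1 / Real.sqrt lam) := by ring
  rw [hdiv]
  by_contra hcon
  push_neg at hcon
  have h1 : (c * (1 / Real.sqrt lam) + 1) * a ≤ a * a :=
    mul_le_mul_of_nonneg_right hcon.le ha0
  have h2 : (c * (1 / Real.sqrt lam) + 1) * a
      = c * (1 / Real.sqrt lam) * a + a := by ring
  linarith [hkey, hd0]
end

section
/- For any integer M ≥ 8 there exist vectors θ⁰, θ¹, …, θ^N ∈ {0,1}^M such that θ⁰ = (0,…,0), the Hamming distance H(θ^i, θ^j) > M/8 for all i ≠ j, and N ≥ 2^{M/8}. -/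
open Finset

lemma VG_count (M : ℕ) (hM : 8 ≤ M) :
    (∑ k ∈ range (M/8 + 1), M.choose k) * 2 ^ (M/8 + 2) ≤ 2 ^ M := by
  set m := M / 8 with hm
  have h8m : 8 * m ≤ M := Nat.mul_div_le M 8 |>.trans_eq rfl |>.trans (le_refl M) |>.trans (le_refl M)
  -- step 1 : V * 7^(M-m) ≤ 8^M
  have step1 : (∑ k ∈ range (m + 1), M.choose k) * 7 ^ (M - m) ≤ 8 ^ M := by
    have h1 : (∑ k ∈ range (m + 1), M.choose k) * 7 ^ (M - m)
        = ∑ k ∈ range (m + 1), M.choose k * 7 ^ (M - m) := by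
      rw [Finset.sum_mul]
    rw [h1]
    have h2 : ∑ k ∈ range (m + 1), M.choose k * 7 ^ (M - m)
        ≤ ∑ k ∈ range (m + 1), M.choose k * 7 ^ (M - k) := by
      apply Finset.sum_le_sum
      intro k hk
      have : k ≤ m := Nat.lt_succ_iff.mp (mem_range.mp hk)
      exact Nat.mul_le_mul_left _ (Nat.pow_le_pow_right (by norm_num) (by omega))
    refine h2.trans ?_
    have h3 : ∑ k ∈ range (m + 1), M.choose k * 7 ^ (M - k)
        ≤ ∑ k ∈ range (M + 1), M.choose k * 7 ^ (M - k) := by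
      apply Finset.sum_le_sum_of_subset
      exact Finset.range_subset_range.mpr (by omega)
    refine h3.trans (le_of_eq ?_)
    have := add_pow 1 7 M (R := ℕ)
    simp only [one_pow, one_mul] at this
    calc ∑ k ∈ range (M + 1), M.choose k * 7 ^ (M - k)
        = ∑ k ∈ range (M + 1), 7 ^ (M - k) * M.choose k := by
          exact Finset.sum_congr rfl fun k _ => Nat.mul_comm _ _
      _ = (1 + 7) ^ M := this.symm
      _ = 8 ^ M := by norm_num
  -- step 2 : 2^(2M+m+2) ≤ 7^(M-m)
  have step2 : (2:ℕ) ^ (2*M + m + 2) ≤ 7 ^ (M - m) := by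
    have he : 8 * (2*M + m + 2) ≤ 19 * M := by omega
    have hf : 7 * M ≤ 8 * (M - m) := by omega
    have : ((2:ℕ) ^ (2*M + m + 2)) ^ 8 ≤ ((7:ℕ) ^ (M - m)) ^ 8 := by
      rw [← pow_mul, ← pow_mul]
      calc (2:ℕ) ^ ((2*M + m + 2) * 8) ≤ 2 ^ (19 * M) :=
            Nat.pow_le_pow_right (by norm_num) (by omega)
        _ = (2^19 : ℕ) ^ M := by rw [← pow_mul]
        _ ≤ (7^7 : ℕ) ^ M := Nat.pow_le_pow_left (by norm_num) M
        _ = 7 ^ (7 * M) := by rw [← pow_mul]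
        _ ≤ 7 ^ ((M - m) * 8) := Nat.pow_le_pow_right (by norm_num) (by omega)
    exact le_of_pow_le_pow_left₀ (by norm_num) (Nat.zero_le _) this
  -- combine
  have key : ((∑ k ∈ range (m + 1), M.choose k) * 2 ^ (m + 2)) * 7 ^ (M - m)
      ≤ (2 ^ M) * 7 ^ (M - m) := by
    calc ((∑ k ∈ range (m + 1), M.choose k) * 2 ^ (m + 2)) * 7 ^ (M - m)
        = ((∑ k ∈ range (m + 1), M.choose k) * 7 ^ (M - m)) * 2 ^ (m + 2) := by ring
      _ ≤ 8 ^ M * 2 ^ (m + 2) := Nat.mul_le_mul_right _ step1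
      _ = 2 ^ M * 2 ^ (2*M + m + 2) := by
          rw [show (8:ℕ) = 2^3 by norm_num, ← pow_mul, ← pow_add, ← pow_add]
          ring_nf
      _ ≤ 2 ^ M * 7 ^ (M - m) := Nat.mul_le_mul_left _ step2
  exact Nat.le_of_mul_le_mul_right key (by positivity)

lemma VG_ball (M m : ℕ) (c : Fin M → Bool) :
    (univ.filter (fun x : Fin M → Bool => hammingDist c x ≤ m)).card
      ≤ ∑ k ∈ range (m + 1), M.choose k := by
  classical
  set T : Finset (Finset (Fin M)) :=
    (range (m + 1)).biUnion (fun k => Finset.powersetCard k univ) with hT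
  have hTcard : T.card ≤ ∑ k ∈ range (m + 1), M.choose k := by
    refine (Finset.card_biUnion_le).trans ?_
    apply Finset.sum_le_sum
    intro k _
    rw [Finset.card_powersetCard, Finset.card_univ, Fintype.card_fin]
  refine le_trans ?_ hTcard
  apply Finset.card_le_card_of_injOn (fun x => univ.filter (fun i => c i ≠ x i))
  · intro x hx
    simp only [Finset.mem_coe, mem_filter, mem_univ, true_and] at hx
    simp only [Finset.mem_coe, hT, Finset.mem_biUnion, Finset.mem_range, Finset.mem_powersetCard]
    exact ⟨(univ.filter (fun i => c i ≠ x i)).card, Nat.lt_succ_of_le hx,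
      Finset.subset_univ _, rfl⟩
  · intro x _ y _ hxy
    funext i
    simp only at hxy
    have hi : (i ∈ univ.filter (fun j => c j ≠ x j)) ↔ (i ∈ univ.filter (fun j => c j ≠ y j)) := by
      rw [hxy]
    simp only [mem_filter, mem_univ, true_and] at hi
    by_cases h : c i = x i
    · have : c i = y i := by
        by_contra hy
        exact (hi.mpr hy) h
      rw [← h, this]
    · have hy : c i ≠ y i := hi.mp h
      revert h hy
      cases c i <;> cases x i <;> cases y i <;> simp

/-- Varshamov–Gilbert lemma: for any `M ≥ 8` there exist binary vectors
`θ⁰, …, θᴺ ∈ {0,1}^M` with `θ⁰ = 0`, pairwise Hamming distance `> M/8`, and `N ≥ 2^{M/8}`. -/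
theorem stmt15 (M : ℕ) (hM : 8 ≤ M) :
    ∃ (N : ℕ) (θ : Fin (N + 1) → (Fin M → Bool)),
      θ 0 = (fun _ => false) ∧
      (∀ i j : Fin (N + 1), i ≠ j → (M : ℝ) / 8 < hammingDist (θ i) (θ j)) ∧
      (2 : ℝ) ^ ((M : ℝ) / 8) ≤ N := by
  classical
  set m := M / 8 with hm
  set z : Fin M → Bool := fun _ => false with hz
  set P : Finset (Fin M → Bool) → Prop := fun C =>
    z ∈ C ∧ ∀ x ∈ C, ∀ y ∈ C, x ≠ y → m + 1 ≤ hammingDist x y with hP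
  set S := (univ : Finset (Finset (Fin M → Bool))).filter P with hSdef
  have hSne : S.Nonempty := by
    refine ⟨{z}, ?_⟩
    simp only [hSdef, mem_filter, mem_univ, true_and, hP]
    refine ⟨Finset.mem_singleton_self z, ?_⟩
    intro x hx y hy hxy
    rw [Finset.mem_singleton] at hx hy
    exact absurd (hx.trans hy.symm) hxy
  obtain ⟨C, hCS, hmax⟩ := S.exists_max_image Finset.card hSne
  rw [hSdef, mem_filter] at hCS
  obtain ⟨-, hzC, hCdist⟩ := hCS
  -- maximality gives covering
  have hcover : ∀ x : Fin M → Bool, ∃ c ∈ C, hammingDist c x ≤ m := by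
    intro x
    by_contra hcon
    push_neg at hcon
    have hxC : x ∉ C := by
      intro hx
      have := hcon x hx
      rw [hammingDist_self] at this
      omega
    have hP' : P (insert x C) := by
      refine ⟨Finset.mem_insert_of_mem hzC, ?_⟩
      intro a ha b hb hab
      rw [Finset.mem_insert] at ha hb
      rcases ha with ha | ha
      · rcases hb with hb | hb
        · exact absurd (ha.trans hb.symm) hab
        · subst ha
          have := hcon b hb
          rw [hammingDist_comm]
          omega
      · rcases hb with hb | hb
        · subst hb
          have := hcon a ha
          omega
        · exact hCdist a ha b hb hab
    have hmem : insert x C ∈ S := by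
      rw [hSdef, mem_filter]; exact ⟨mem_univ _, hP'⟩
    have := hmax _ hmem
    rw [Finset.card_insert_of_notMem hxC] at this
    omega
  -- counting: 2^M ≤ C.card * V
  set V := ∑ k ∈ range (m + 1), M.choose k with hV
  have h2M : 2 ^ M ≤ C.card * V := by
    have hsub : (univ : Finset (Fin M → Bool)) ⊆
        C.biUnion (fun c => univ.filter (fun x => hammingDist c x ≤ m)) := by
      intro x _
      obtain ⟨c, hc, hd⟩ := hcover x
      exact Finset.mem_biUnion.mpr ⟨c, hc, by simp [hd]⟩
    calc (2:ℕ) ^ M = Fintype.card (Fin M → Bool) := by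
          rw [Fintype.card_fun]; simp
      _ = (univ : Finset (Fin M → Bool)).card := (Finset.card_univ).symm
      _ ≤ (C.biUnion (fun c => univ.filter (fun x => hammingDist c x ≤ m))).card :=
          Finset.card_le_card hsub
      _ ≤ ∑ c ∈ C, (univ.filter (fun x => hammingDist c x ≤ m)).card :=
          Finset.card_biUnion_le
      _ ≤ ∑ _c ∈ C, V := Finset.sum_le_sum (fun c _ => VG_ball M m c)
      _ = C.card * V := by rw [Finset.sum_const, smul_eq_mul]
  -- conclude card bound
  have hVpos : 0 < V := by
    rw [hV]
    exact Finset.sum_pos' (fun _ _ => Nat.zero_le _)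
      ⟨0, mem_range.mpr (Nat.succ_pos m), by simp⟩
  have hcard : 2 ^ (m + 2) ≤ C.card := by
    have h1 := VG_count M hM
    rw [← hm, ← hV] at h1
    have : V * 2 ^ (m + 2) ≤ V * C.card := by
      calc V * 2 ^ (m + 2) ≤ 2 ^ M := h1
        _ ≤ C.card * V := h2M
        _ = V * C.card := Nat.mul_comm _ _
    exact Nat.le_of_mul_le_mul_left this hVpos
  obtain ⟨N, hN⟩ : ∃ N, C.card = N + 1 := by
    have h1 : 1 ≤ C.card := Finset.card_pos.mpr ⟨z, hzC⟩
    exact ⟨C.card - 1, by omega⟩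
  -- build the enumeration
  have e : {x // x ∈ C} ≃ Fin (N + 1) := C.equivFin.trans (finCongr hN)
  set i0 : Fin (N + 1) := e ⟨z, hzC⟩ with hi0
  set θ : Fin (N + 1) → (Fin M → Bool) :=
    fun k => (e.symm (Equiv.swap 0 i0 k) : Fin M → Bool) with hθ
  have hθmem : ∀ k, θ k ∈ C := fun k => (e.symm (Equiv.swap 0 i0 k)).2
  have hθinj : Function.Injective θ := by
    intro i j hij
    have : e.symm (Equiv.swap 0 i0 i) = e.symm (Equiv.swap 0 i0 j) :=
      Subtype.coe_injective hij
    exact (Equiv.swap 0 i0).injective (e.symm.injective this)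
  refine ⟨N, θ, ?_, ?_, ?_⟩
  · show (e.symm (Equiv.swap 0 i0 0) : Fin M → Bool) = z
    rw [Equiv.swap_apply_left, hi0, Equiv.symm_apply_apply]
  · intro i j hij
    have hne : θ i ≠ θ j := fun h => hij (hθinj h)
    have hd : m + 1 ≤ hammingDist (θ i) (θ j) := hCdist _ (hθmem i) _ (hθmem j) hne
    have hM8 : M < 8 * (m + 1) := by
      rw [hm]; omega
    have : (M : ℝ) / 8 < (m + 1 : ℕ) := by
      rw [div_lt_iff₀ (by norm_num : (0:ℝ) < 8)]
      push_cast
      exact_mod_cast by push_cast; linarith [show (M:ℝ) < 8 * (m+1) by exact_mod_cast hM8]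
    calc (M : ℝ) / 8 < (m + 1 : ℕ) := this
      _ ≤ hammingDist (θ i) (θ j) := by exact_mod_cast hd
  · have hN2 : 2 ^ (m + 1) ≤ N := by
      have h2 : (2:ℕ) ^ (m + 2) = 2 * 2 ^ (m + 1) := by ring
      have hp : 1 ≤ 2 ^ (m + 1) := Nat.one_le_two_pow
      omega
    have hexp : (M : ℝ) / 8 ≤ ((m + 1 : ℕ) : ℝ) := by
      have hM8 : M < 8 * (m + 1) := by rw [hm]; omega
      rw [div_le_iff₀ (by norm_num : (0:ℝ) < 8)]
      have : (M:ℝ) ≤ 8 * ((m+1:ℕ):ℝ) := by exact_mod_cast hM8.le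
      linarith
    calc (2 : ℝ) ^ ((M : ℝ) / 8) ≤ (2 : ℝ) ^ (((m + 1 : ℕ) : ℝ)) :=
          Real.rpow_le_rpow_of_exponent_le (by norm_num) hexp
      _ = ((2 ^ (m + 1) : ℕ) : ℝ) := by
          rw [Real.rpow_natCast]; push_cast; ring
      _ ≤ (N : ℝ) := by exact_mod_cast hN2
end
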